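/- Let α < β be real numbers, F = [α, β], let ρ : ℝ → ℂ be continuous on F, and define f(z) := (1/(2πi)) ∫_α^β ρ(x)/(x − z) dx for z ∈ ℂ \ F. Let Q be a complex polynomial and m a natural number. Then the following are equivalent: (i) there exists a complex polynomial P such that z^{m+1}·(Q(z)f(z) − P(z)) remains bounded as |z| → ∞ (i.e., Q·f − P = O(z^{−m−1}) along the cobounded filter); (ii) ∫_α^β x^k·Q(x)·ρ(x) dx = 0 for every integer k with 0 ≤ k ≤ m−1. -/

import Mathlib

open Complex Filter intervalIntegral

namespace HPadeAux

open MeasureTheory Polynomial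

variable {α β : ℝ}

lemma cont_div {g : ℝ → ℂ} (hab : α ≤ β) (hg : ContinuousOn g (Set.Icc α β)) {z : ℂ}
    (hz : ∀ x ∈ Set.Icc α β, (x:ℂ) ≠ z) :
    IntervalIntegrable (fun x => g x / ((x:ℂ) - z)) volume α β := by
  apply ContinuousOn.intervalIntegrable
  rw [Set.uIcc_of_le hab]
  exact hg.div ((Complex.continuous_ofReal.continuousOn).sub continuousOn_const)
    (fun x hx => sub_ne_zero.mpr (hz x hx))

lemma cont_int {g : ℝ → ℂ} (hab : α ≤ β) (hg : ContinuousOn g (Set.Icc α β)) :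
    IntervalIntegrable g volume α β := by
  apply ContinuousOn.intervalIntegrable; rwa [Set.uIcc_of_le hab]

lemma contOn_pow {g : ℝ → ℂ} (hg : ContinuousOn g (Set.Icc α β)) (k : ℕ) :
    ContinuousOn (fun x : ℝ => (x:ℂ)^k * g x) (Set.Icc α β) :=
  ((Complex.continuous_ofReal.pow k).continuousOn).mul hg

lemma rec_step {g : ℝ → ℂ} (hab : α ≤ β) (hg : ContinuousOn g (Set.Icc α β)) {z : ℂ}
    (hz : ∀ x ∈ Set.Icc α β, (x:ℂ) ≠ z) (k : ℕ) :
    (∫ x in α..β, (x:ℂ)^(k+1) * g x / ((x:ℂ) - z))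
      = (∫ x in α..β, (x:ℂ)^k * g x)
          + z * ∫ x in α..β, (x:ℂ)^k * g x / ((x:ℂ) - z) := by
  have h1 : (∫ x in α..β, (x:ℂ)^(k+1) * g x / ((x:ℂ) - z))
      = ∫ x in α..β, ((x:ℂ)^k * g x + z * ((x:ℂ)^k * g x / ((x:ℂ) - z))) := by
    apply intervalIntegral.integral_congr
    intro x hx
    rw [Set.uIcc_of_le hab] at hx
    have hxz : (x:ℂ) - z ≠ 0 := sub_ne_zero.mpr (hz x hx)
    field_simp
    ring
  rw [h1, intervalIntegral.integral_add (cont_int hab (contOn_pow hg k))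
      ((cont_div hab (contOn_pow hg k) hz).const_mul z),
    intervalIntegral.integral_const_mul]

lemma pow_T {g : ℝ → ℂ} (hab : α ≤ β) (hg : ContinuousOn g (Set.Icc α β))
    {k : ℕ} (hM : ∀ j < k, (∫ x in α..β, (x:ℂ)^j * g x) = 0) {z : ℂ}
    (hz : ∀ x ∈ Set.Icc α β, (x:ℂ) ≠ z) :
    z^k * (∫ x in α..β, g x / ((x:ℂ) - z))
      = ∫ x in α..β, (x:ℂ)^k * g x / ((x:ℂ) - z) := by
  induction k with
  | zero => simp
  | succ k ih =>
    calc z^(k+1) * (∫ x in α..β, g x / ((x:ℂ) - z))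
        = z * (z^k * ∫ x in α..β, g x / ((x:ℂ) - z)) := by ring
      _ = z * ∫ x in α..β, (x:ℂ)^k * g x / ((x:ℂ) - z) := by
          rw [ih fun j hj => hM j (hj.trans (Nat.lt_succ_self k))]
      _ = ∫ x in α..β, (x:ℂ)^(k+1) * g x / ((x:ℂ) - z) := by
          rw [rec_step hab hg hz k, hM k (Nat.lt_succ_self k), zero_add]

lemma key_pow (hab : α ≤ β) {ρ : ℝ → ℂ} (hρ : ContinuousOn ρ (Set.Icc α β)) (n : ℕ) :
    ∃ R : Polynomial ℂ, ∀ z : ℂ, (∀ x ∈ Set.Icc α β, (x:ℂ) ≠ z) →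
      z^n * (∫ x in α..β, ρ x / ((x:ℂ) - z))
        = (∫ x in α..β, (x:ℂ)^n * ρ x / ((x:ℂ) - z)) + R.eval z := by
  induction n with
  | zero => exact ⟨0, fun z _ => by simp⟩
  | succ n ih =>
    obtain ⟨R, hR⟩ := ih
    refine ⟨Polynomial.X * R - Polynomial.C (∫ x in α..β, (x:ℂ)^n * ρ x), fun z hz => ?_⟩
    have h2 := rec_step hab hρ hz n
    rw [show z^(n+1) * (∫ x in α..β, ρ x / ((x:ℂ) - z))
          = z * (z^n * ∫ x in α..β, ρ x / ((x:ℂ) - z)) from by ring,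
      hR z hz, h2]
    simp only [eval_sub, eval_mul, eval_C, eval_X]
    ring

lemma key_poly (hab : α ≤ β) {ρ : ℝ → ℂ} (hρ : ContinuousOn ρ (Set.Icc α β)) (Q : Polynomial ℂ) :
    ∃ R : Polynomial ℂ, ∀ z : ℂ, (∀ x ∈ Set.Icc α β, (x:ℂ) ≠ z) →
      Q.eval z * (∫ x in α..β, ρ x / ((x:ℂ) - z))
        = (∫ x in α..β, Q.eval (x:ℂ) * ρ x / ((x:ℂ) - z)) + R.eval z := by
  induction Q using Polynomial.induction_on' with
  | add p q hp hq =>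
    obtain ⟨Rp, hRp⟩ := hp
    obtain ⟨Rq, hRq⟩ := hq
    refine ⟨Rp + Rq, fun z hz => ?_⟩
    have hip : ContinuousOn (fun x : ℝ => p.eval (x:ℂ) * ρ x) (Set.Icc α β) :=
      ((p.continuous.comp Complex.continuous_ofReal).continuousOn).mul hρ
    have hiq : ContinuousOn (fun x : ℝ => q.eval (x:ℂ) * ρ x) (Set.Icc α β) :=
      ((q.continuous.comp Complex.continuous_ofReal).continuousOn).mul hρ
    have hint : (∫ x in α..β, (p+q).eval (x:ℂ) * ρ x / ((x:ℂ) - z))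
        = (∫ x in α..β, p.eval (x:ℂ) * ρ x / ((x:ℂ) - z))
            + ∫ x in α..β, q.eval (x:ℂ) * ρ x / ((x:ℂ) - z) := by
      rw [← intervalIntegral.integral_add (cont_div hab hip hz) (cont_div hab hiq hz)]
      apply intervalIntegral.integral_congr
      intro x hx
      simp only [eval_add]
      ring
    rw [hint]
    simp only [eval_add]
    rw [add_mul, hRp z hz, hRq z hz]
    ring
  | monomial n a =>
    obtain ⟨R, hR⟩ := key_pow hab hρ n
    refine ⟨Polynomial.C a * R, fun z hz => ?_⟩
    have hmono : (∫ x in α..β, (Polynomial.monomial n a).eval (x:ℂ) * ρ x / ((x:ℂ) - z))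
        = a * ∫ x in α..β, (x:ℂ)^n * ρ x / ((x:ℂ) - z) := by
      rw [← intervalIntegral.integral_const_mul]
      apply intervalIntegral.integral_congr
      intro x hx
      simp only [eval_monomial]
      ring
    rw [eval_monomial, hmono, eval_mul, eval_C, mul_assoc, hR z hz]
    ring

lemma cauchy_bound (hab : α ≤ β) {g : ℝ → ℂ} (hg : ContinuousOn g (Set.Icc α β)) :
    ∃ K : ℝ, 0 ≤ K ∧ ∀ z : ℂ, 2*(|α|+|β|)+2 ≤ ‖z‖ →
      ‖∫ x in α..β, g x / ((x:ℂ) - z)‖ ≤ K / ‖z‖ := by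
  obtain ⟨Mg, hMg⟩ := isCompact_Icc.exists_bound_of_continuousOn hg
  have hMg0 : 0 ≤ Mg := le_trans (norm_nonneg _) (hMg α (Set.left_mem_Icc.mpr hab))
  refine ⟨2*Mg*(β-α), by nlinarith, fun z hz => ?_⟩
  have habs : (0:ℝ) ≤ |α| + |β| := by positivity
  have hz0 : (0:ℝ) < ‖z‖ := by linarith
  have hbd : ∀ x ∈ Set.uIoc α β, ‖g x / ((x:ℂ) - z)‖ ≤ 2*Mg/‖z‖ := by
    intro x hx
    rw [Set.uIoc_of_le hab] at hx
    have hxI : x ∈ Set.Icc α β := ⟨hx.1.le, hx.2⟩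
    have hxa : |x| ≤ |α| + |β| :=
      abs_le.mpr ⟨by linarith [neg_abs_le α, abs_nonneg β, hxI.1],
        by linarith [le_abs_self β, abs_nonneg α, hxI.2]⟩
    have h1 : ‖z‖/2 ≤ ‖(x:ℂ) - z‖ := by
      have h2 : ‖z‖ - ‖(x:ℂ)‖ ≤ ‖(x:ℂ) - z‖ := by
        rw [norm_sub_rev]; exact norm_sub_norm_le z (x:ℂ)
      have h3 : ‖(x:ℂ)‖ = |x| := by simp
      rw [h3] at h2
      linarith
    rw [norm_div]
    calc ‖g x‖ / ‖(x:ℂ) - z‖ ≤ Mg / (‖z‖/2) :=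
          div_le_div₀ hMg0 (hMg x hxI) (by positivity) h1
      _ = 2*Mg/‖z‖ := by rw [div_div_eq_mul_div]; ring_nf
  have hest := intervalIntegral.norm_integral_le_of_norm_le_const hbd
  rw [_root_.abs_of_nonneg (by linarith : (0:ℝ) ≤ β - α)] at hest
  calc ‖∫ x in α..β, g x / ((x:ℂ) - z)‖ ≤ 2*Mg/‖z‖*(β-α) := hest
    _ = 2*Mg*(β-α)/‖z‖ := by ring

lemma tendsto_Kdiv (K : ℝ) :
    Tendsto (fun z : ℂ => K / ‖z‖) (Bornology.cobounded ℂ) (nhds 0) := by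
  have h2 : Tendsto (fun z : ℂ => ‖z‖⁻¹) (Bornology.cobounded ℂ) (nhds 0) :=
    (tendsto_norm_cobounded_atTop (E := ℂ)).inv_tendsto_atTop
  simpa [div_eq_mul_inv] using h2.const_mul K

end HPadeAux

/-- Equivalence of the Hermite–Padé interpolation conditions with the non-Hermitian
orthogonality relations: for `f` the Cauchy transform of a continuous density `ρ` on
`F = [α,β]`, a polynomial `Q` admits a polynomial `P` with
`Q·f − P = O(z^{−m−1})` as `|z| → ∞` if and only if
`∫ xᵏ Q(x) ρ(x) dx = 0` for `0 ≤ k ≤ m−1`. -/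
theorem interpolation_iff_orthogonality (α β : ℝ) (hab : α < β) (ρ : ℝ → ℂ)
    (hρ : ContinuousOn ρ (Set.Icc α β)) (Q : Polynomial ℂ) (m : ℕ) :
    (∃ P : Polynomial ℂ,
      Filter.IsBoundedUnder (· ≤ ·) (Bornology.cobounded ℂ)
        (fun z : ℂ => ‖z ^ (m + 1) *
          (Q.eval z * ((2 * (Real.pi : ℂ) * Complex.I)⁻¹ * ∫ x in α..β, ρ x / ((x : ℂ) - z))
            - P.eval z)‖)) ↔
    (∀ k : ℕ, k < m → (∫ x in α..β, (x : ℂ) ^ k * Q.eval (x : ℂ) * ρ x) = 0) := by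
  open Polynomial in
  have hab' : α ≤ β := hab.le
  set c : ℂ := (2 * (Real.pi : ℂ) * Complex.I)⁻¹ with hc
  have hc0 : c ≠ 0 := by
    rw [hc]
    exact inv_ne_zero (mul_ne_zero (mul_ne_zero two_ne_zero
      (Complex.ofReal_ne_zero.mpr Real.pi_ne_zero)) Complex.I_ne_zero)
  have hcn : (0:ℝ) < ‖c‖ := norm_pos_iff.mpr hc0
  have hg : ContinuousOn (fun x : ℝ => Q.eval (x:ℂ) * ρ x) (Set.Icc α β) :=
    ((Q.continuous.comp Complex.continuous_ofReal).continuousOn).mul hρ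
  have hmom : ∀ k : ℕ, (∫ x in α..β, (x:ℂ)^k * Q.eval (x:ℂ) * ρ x)
      = ∫ x in α..β, (x:ℂ)^k * (Q.eval (x:ℂ) * ρ x) := by
    intro k
    apply intervalIntegral.integral_congr
    intro x _
    ring
  obtain ⟨R, hR⟩ := HPadeAux.key_poly hab' hρ Q
  have habs : (0:ℝ) ≤ |α| + |β| := by positivity
  have hgood : ∀ z : ℂ, 2*(|α|+|β|)+2 ≤ ‖z‖ → ∀ x ∈ Set.Icc α β, (x:ℂ) ≠ z := by
    intro z hz x hx hEq
    have hxa : |x| ≤ |α| + |β| :=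
      abs_le.mpr ⟨by linarith [neg_abs_le α, abs_nonneg β, hx.1],
        by linarith [le_abs_self β, abs_nonneg α, hx.2]⟩
    rw [← hEq] at hz
    have h3 : ‖(x:ℂ)‖ = |x| := by simp
    rw [h3] at hz
    linarith
  have hev : ∀ᶠ z : ℂ in Bornology.cobounded ℂ, 2*(|α|+|β|)+2 ≤ ‖z‖ :=
    eventually_cobounded_le_norm _
  have master : ∀ z : ℂ, (∀ x ∈ Set.Icc α β, (x:ℂ) ≠ z) →
      Q.eval z * (c * ∫ x in α..β, ρ x / ((x:ℂ) - z)) - (Polynomial.C c * R).eval z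
        = c * ∫ x in α..β, Q.eval (x:ℂ) * ρ x / ((x:ℂ) - z) := by
    intro z hz
    rw [eval_mul, eval_C, mul_left_comm, hR z hz]
    ring
  constructor
  · -- interpolation → orthogonality
    rintro ⟨P, b, hb⟩
    rw [Filter.eventually_map] at hb
    -- T0 tends to 0
    obtain ⟨K0, hK00, hK0⟩ := HPadeAux.cauchy_bound hab' hg
    have hT0 : Tendsto (fun z : ℂ => ∫ x in α..β, Q.eval (x:ℂ) * ρ x / ((x:ℂ) - z))
        (Bornology.cobounded ℂ) (nhds 0) := by
      apply squeeze_zero_norm' ?_ (HPadeAux.tendsto_Kdiv K0)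
      filter_upwards [hev] with z hz
      exact hK0 z hz
    -- Q f - P tends to 0
    have hQfP : Tendsto
        (fun z : ℂ => Q.eval z * (c * ∫ x in α..β, ρ x / ((x:ℂ) - z)) - P.eval z)
        (Bornology.cobounded ℂ) (nhds 0) := by
      have hb0 : 0 ≤ b := by
        obtain ⟨z0, hz0'⟩ := hb.exists
        exact le_trans (norm_nonneg _) hz0'
      apply squeeze_zero_norm' ?_ (HPadeAux.tendsto_Kdiv b)
      filter_upwards [hb, hev] with z h1 h2
      have hz1 : (1:ℝ) ≤ ‖z‖ := by linarith
      have hz0 : (0:ℝ) < ‖z‖ := by linarith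
      rw [norm_mul, norm_pow] at h1
      rw [le_div_iff₀ hz0]
      have e2 : ‖z‖ ≤ ‖z‖^(m+1) := le_self_pow₀ hz1 (Nat.succ_ne_zero m)
      nlinarith [norm_nonneg (Q.eval z * (c * ∫ x in α..β, ρ x / ((x:ℂ) - z)) - P.eval z),
        mul_le_mul_of_nonneg_left e2
          (norm_nonneg (Q.eval z * (c * ∫ x in α..β, ρ x / ((x:ℂ) - z)) - P.eval z))]
    -- D := P - C c * R tends to 0, hence is 0
    have h8 : Tendsto (fun z : ℂ => c * ∫ x in α..β, Q.eval (x:ℂ) * ρ x / ((x:ℂ) - z))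
        (Bornology.cobounded ℂ) (nhds 0) := by
      simpa using hT0.const_mul c
    have hDt : Tendsto (fun z : ℂ => (P - Polynomial.C c * R).eval z)
        (Bornology.cobounded ℂ) (nhds 0) := by
      have h9 := h8.sub hQfP
      rw [sub_zero] at h9
      apply h9.congr'
      filter_upwards [hev] with z hz
      have hm' := master z (hgood z hz)
      simp only [eval_sub]
      linear_combination -hm'
    have hD0 : P - Polynomial.C c * R = 0 := by
      by_cases hdeg : 0 < (P - Polynomial.C c * R).degree
      · exfalso
        exact not_tendsto_atTop_of_tendsto_nhds hDt.norm
          (Polynomial.tendsto_norm_atTop _ hdeg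
            (tendsto_norm_cobounded_atTop (E := ℂ)))
      · have hle : (P - Polynomial.C c * R).degree ≤ 0 := not_lt.mp hdeg
        have hC := Polynomial.eq_C_of_degree_le_zero hle
        have heq : (fun z : ℂ => (P - Polynomial.C c * R).eval z)
            = fun _ : ℂ => (P - Polynomial.C c * R).coeff 0 := by
          funext z
          conv_lhs => rw [hC]
          rw [eval_C]
        rw [heq] at hDt
        have h0 : (P - Polynomial.C c * R).coeff 0 = 0 :=
          tendsto_nhds_unique tendsto_const_nhds hDt
        rw [hC, h0, map_zero]
    have hPR : P = Polynomial.C c * R := sub_eq_zero.mp hD0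
    -- main induction on moments
    have main : ∀ k, k < m → (∫ x in α..β, (x:ℂ)^k * (Q.eval (x:ℂ) * ρ x)) = 0 := by
      intro k
      induction k using Nat.strong_induction_on with
      | _ k IH =>
        intro hk
        obtain ⟨K1, hK10, hK1⟩ := HPadeAux.cauchy_bound hab' (HPadeAux.contOn_pow hg (k+1))
        have t1 : Tendsto
            (fun z : ℂ => ∫ x in α..β, (x:ℂ)^(k+1) * (Q.eval (x:ℂ) * ρ x) / ((x:ℂ) - z))
            (Bornology.cobounded ℂ) (nhds 0) := by
          apply squeeze_zero_norm' ?_ (HPadeAux.tendsto_Kdiv K1)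
          filter_upwards [hev] with z hz
          exact hK1 z hz
        have t2 : Tendsto
            (fun z : ℂ => z^(k+1) * ∫ x in α..β, Q.eval (x:ℂ) * ρ x / ((x:ℂ) - z))
            (Bornology.cobounded ℂ) (nhds 0) := by
          apply squeeze_zero_norm' ?_ (HPadeAux.tendsto_Kdiv (b/‖c‖))
          filter_upwards [hb, hev] with z h1 h2
          have hz1 : (1:ℝ) ≤ ‖z‖ := by linarith
          have hz0 : (0:ℝ) < ‖z‖ := by linarith
          rw [hPR, master z (hgood z h2), norm_mul, norm_mul, norm_pow] at h1
          rw [norm_mul, norm_pow, le_div_iff₀ hz0, le_div_iff₀ hcn]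
          have e2 : ‖z‖^(k+1) * ‖z‖ ≤ ‖z‖^(m+1) := by
            rw [← pow_succ]
            exact pow_le_pow_right₀ hz1 (by omega)
          have e3 : ‖z‖^(k+1) * ‖z‖ * (‖c‖ * ‖∫ x in α..β, Q.eval (x:ℂ) * ρ x / ((x:ℂ) - z)‖)
              ≤ ‖z‖^(m+1) * (‖c‖ * ‖∫ x in α..β, Q.eval (x:ℂ) * ρ x / ((x:ℂ) - z)‖) :=
            mul_le_mul_of_nonneg_right e2 (by positivity)
          nlinarith [e3, h1]
        have hMk_lt : ∀ j, j < k → (∫ x in α..β, (x:ℂ)^j * (Q.eval (x:ℂ) * ρ x)) = 0 :=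
          fun j hj => IH j hj (hj.trans hk)
        have evEq : ∀ᶠ z : ℂ in Bornology.cobounded ℂ,
            (∫ x in α..β, (x:ℂ)^k * (Q.eval (x:ℂ) * ρ x))
              = (∫ x in α..β, (x:ℂ)^(k+1) * (Q.eval (x:ℂ) * ρ x) / ((x:ℂ) - z))
                - z^(k+1) * ∫ x in α..β, Q.eval (x:ℂ) * ρ x / ((x:ℂ) - z) := by
          filter_upwards [hev] with z hz
          have hzg := hgood z hz
          have hrec := HPadeAux.rec_step hab' hg hzg k
          have hpow := HPadeAux.pow_T hab' hg hMk_lt hzg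
          rw [hrec, ← hpow]
          ring
        have tconst : Tendsto (fun _ : ℂ => ∫ x in α..β, (x:ℂ)^k * (Q.eval (x:ℂ) * ρ x))
            (Bornology.cobounded ℂ) (nhds 0) := by
          have h10 := t1.sub t2
          rw [sub_zero] at h10
          exact h10.congr' (evEq.mono fun z hz => hz.symm)
        exact tendsto_nhds_unique tendsto_const_nhds tconst
    intro k hk
    rw [hmom k]
    exact main k hk
  · -- orthogonality → interpolation
    intro hM
    have hMg : ∀ j, j < m → (∫ x in α..β, (x:ℂ)^j * (Q.eval (x:ℂ) * ρ x)) = 0 := by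
      intro j hj
      rw [← hmom j]
      exact hM j hj
    obtain ⟨K, hK0', hK⟩ := HPadeAux.cauchy_bound hab' (HPadeAux.contOn_pow hg m)
    refine ⟨Polynomial.C c * R, ‖c‖ * K, ?_⟩
    rw [Filter.eventually_map]
    filter_upwards [hev] with z hz
    have hzg := hgood z hz
    have hz0 : (0:ℝ) < ‖z‖ := by linarith
    rw [master z hzg]
    have hpow : z^m * (∫ x in α..β, Q.eval (x:ℂ) * ρ x / ((x:ℂ) - z))
        = ∫ x in α..β, (x:ℂ)^m * (Q.eval (x:ℂ) * ρ x) / ((x:ℂ) - z) :=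
      HPadeAux.pow_T hab' hg (fun j hj => hMg j hj) hzg
    have h5 : z^(m+1) * (c * ∫ x in α..β, Q.eval (x:ℂ) * ρ x / ((x:ℂ) - z))
        = c * (z * ∫ x in α..β, (x:ℂ)^m * (Q.eval (x:ℂ) * ρ x) / ((x:ℂ) - z)) := by
      rw [← hpow]
      ring
    rw [h5, norm_mul, norm_mul]
    have h6 : ‖∫ x in α..β, (x:ℂ)^m * (Q.eval (x:ℂ) * ρ x) / ((x:ℂ) - z)‖ ≤ K / ‖z‖ :=
      hK z hz
    exact mul_le_mul_of_nonneg_left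
      (by rw [mul_comm]; exact (le_div_iff₀ hz0).mp h6) hcn.le
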